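/- Let (G,T) be a bipartite graft with color classes A and B, let F be a minimum join of (G,T), and let X ⊆ A be a maximal bipartitic extreme set. Let C' ⊆ C_X, and let G' = G − C' and T' = T ∖ C'. Then a set of edges is a minimum join of (G',T') if and only if it is a minimum join of (G,T). -/

import Mathlib

open scoped Classical

variable {V : Type*}

/-- The `F`-weight of a walk: number of edges outside `F` minus number of edges in `F`. -/
noncomputable def walkWeight {G : SimpleGraph V} (F : Set (Sym2 V)) {x y : V}
    (p : G.Walk x y) : ℤ :=
  ((p.edges.filter fun e => e ∉ F).length : ℤ) -
    ((p.edges.filter fun e => e ∈ F).length : ℤ)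

/-- The `F`-distance between `x` and `y`: the minimum `F`-weight of a path between them. -/
noncomputable def distF (G : SimpleGraph V) (F : Set (Sym2 V)) (x y : V) : ℤ :=
  sInf {w : ℤ | ∃ p : G.Walk x y, p.IsPath ∧ walkWeight F p = w}

/-- `F` is a join of the graft `(G, T)`. -/
def IsJoin (G : SimpleGraph V) (T : Set V) (F : Set (Sym2 V)) : Prop :=
  F ⊆ G.edgeSet ∧ ∀ v : V, v ∈ T ↔ Odd {e ∈ F | v ∈ e}.ncard

/-- `F` is a minimum join of the graft `(G, T)`. -/
def IsMinJoin (G : SimpleGraph V) (T : Set V) (F : Set (Sym2 V)) : Prop :=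
  IsJoin G T F ∧ ∀ F' : Set (Sym2 V), IsJoin G T F' → F.ncard ≤ F'.ncard

/-- `(G, T)` is a graft: every connected component contains an even number of vertices of `T`. -/
def IsGraft (G : SimpleGraph V) (T : Set V) : Prop :=
  ∀ v : V, Even {u | u ∈ T ∧ G.Reachable v u}.ncard

/-- `X` is an extreme set: `d_F(x, y) ≥ 0` for all `x, y ∈ X`. -/
def IsExtremeSet (G : SimpleGraph V) (F : Set (Sym2 V)) (X : Set V) : Prop :=
  ∀ x ∈ X, ∀ y ∈ X, 0 ≤ distF G F x y

/-- `G` is bipartite with vertex set `Vset` and color classes `A`, `B`. -/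
def IsBipartitionOn (G : SimpleGraph V) (Vset A B : Set V) : Prop :=
  A ∪ B = Vset ∧ Disjoint A B ∧
    ∀ v w : V, G.Adj v w → (v ∈ A ∧ w ∈ B) ∨ (v ∈ B ∧ w ∈ A)

/-- `X` is a maximal bipartitic extreme set with respect to color classes `A`, `B`. -/
def MaxBipExtreme (G : SimpleGraph V) (F : Set (Sym2 V)) (A B X : Set V) : Prop :=
  IsExtremeSet G F X ∧ (X ⊆ A ∨ X ⊆ B) ∧
    ∀ X' : Set V, IsExtremeSet G F X' → (X' ⊆ A ∨ X' ⊆ B) → X ⊆ X' → X' = X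

/-- `D_X`: the vertices of `Vset ∖ X` at negative `F`-distance from `X`. -/
def Dset (G : SimpleGraph V) (F : Set (Sym2 V)) (Vset X : Set V) : Set V :=
  {y | y ∈ Vset ∧ y ∉ X ∧ ∃ x ∈ X, distF G F x y < 0}

/-- `C_X = Vset ∖ X ∖ D_X`. -/
def Cset (G : SimpleGraph V) (F : Set (Sym2 V)) (Vset X : Set V) : Set V :=
  (Vset \ X) \ Dset G F Vset X

/-- `min_{x ∈ X} d_F(x, y)`. -/
noncomputable def minDistX (G : SimpleGraph V) (F : Set (Sym2 V)) (X : Set V) (y : V) : ℤ :=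
  sInf {d : ℤ | ∃ x ∈ X, distF G F x y = d}

/-- The graph `G − S` obtained by deleting the vertices of `S`. -/
def gDelete (G : SimpleGraph V) (S : Set V) : SimpleGraph V where
  Adj v w := G.Adj v w ∧ v ∉ S ∧ w ∉ S
  symm := ⟨fun v w ⟨h, hv, hw⟩ => ⟨h.symm, hw, hv⟩⟩
  loopless := ⟨fun v h => G.loopless.irrefl v h.1⟩

/-- The subgraph of `G` induced by `S`. -/
def gRestrict (G : SimpleGraph V) (S : Set V) : SimpleGraph V where
  Adj v w := G.Adj v w ∧ v ∈ S ∧ w ∈ S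
  symm := ⟨fun v w ⟨h, hv, hw⟩ => ⟨h.symm, hw, hv⟩⟩
  loopless := ⟨fun v h => G.loopless.irrefl v h.1⟩

/-- `C` is (the vertex set of) a connected component of `G − X`. -/
def IsCompOf (G : SimpleGraph V) (X C : Set V) : Prop :=
  ∃ v, v ∉ X ∧ C = {u | (gDelete G X).Reachable v u}

/-- `δ_G(C)`: the edges of `G` with exactly one end in `C`. -/
def edgeBoundary (G : SimpleGraph V) (C : Set V) : Set (Sym2 V) :=
  {e | e ∈ G.edgeSet ∧ ∃ u v : V, e = s(u, v) ∧ u ∈ C ∧ v ∉ C}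

/-- `X` is an `F`-combic set of the graft `(G, T)`. -/
def IsCombic (G : SimpleGraph V) (T : Set V) (F : Set (Sym2 V)) (X : Set V) : Prop :=
  (∀ u v : V, s(u, v) ∈ F → ¬(u ∈ X ∧ v ∈ X)) ∧
  (∀ C : Set V, IsCompOf G X C → Odd (C ∩ T).ncard →
      (edgeBoundary G C ∩ F).ncard = 1) ∧
  (∀ C : Set V, IsCompOf G X C → Even (C ∩ T).ncard →
      edgeBoundary G C ∩ F = ∅)

/-- The rootlization of `G` by the mount `X`, root `r` and attachment `s`. -/
def rootlize (G : SimpleGraph V) (X : Set V) (r s : V) : SimpleGraph V :=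
  SimpleGraph.fromRel fun v w => G.Adj v w ∨ (v = r ∧ w = s) ∨ (v = s ∧ w ∈ X)

/-- The initial component of `r`: the connected component of `r` in the subgraph
induced by the vertices at nonpositive `F`-distance from `r`. -/
def initComp (G : SimpleGraph V) (F : Set (Sym2 V)) (r : V) : Set V :=
  {x | (gRestrict G {y | distF G F r y ≤ 0}).Reachable r x}

/-- number of edges of `S` incident to `v`. -/
noncomputable def cnt (S : Set (Sym2 V)) (v : V) : ℕ := {e ∈ S | v ∈ e}.ncard

/-- `F`-weight of an edge set. -/
noncomputable def sW (F S : Set (Sym2 V)) : ℤ := ((S \ F).ncard : ℤ) - ((S ∩ F).ncard : ℤ)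

/-- symmetric difference -/
def SD (F Z : Set (Sym2 V)) : Set (Sym2 V) := (F \ Z) ∪ (Z \ F)

/-- edge set of a walk -/
def eset {G : SimpleGraph V} {x y : V} (p : G.Walk x y) : Set (Sym2 V) := {e | e ∈ p.edges}

lemma ncard_setOf_mem {α : Type*} (l : List α) (hl : l.Nodup) (q : α → Prop) :
    {x | x ∈ l ∧ q x}.ncard = (l.filter (fun x => q x)).length := by
  classical
  have h1 : {x | x ∈ l ∧ q x} = ↑(l.filter (fun x => q x)).toFinset := by
    ext x; simp [List.mem_filter]
  rw [h1, Set.ncard_coe_finset, List.toFinset_card_of_nodup (hl.filter _)]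

lemma walkWeight_eq_sW {G : SimpleGraph V} (F : Set (Sym2 V)) {x y : V}
    (p : G.Walk x y) (hp : p.IsPath) : walkWeight F p = sW F (eset p) := by
  have hn : p.edges.Nodup := hp.isTrail.edges_nodup
  have h1 : eset p \ F = {e | e ∈ p.edges ∧ e ∉ F} := by ext e; simp [eset]
  have h2 : eset p ∩ F = {e | e ∈ p.edges ∧ e ∈ F} := by ext e; simp [eset]
  rw [walkWeight, sW, h1, h2, ncard_setOf_mem _ hn, ncard_setOf_mem _ hn]
  congr 2 <;> exact congrArg List.length (List.filter_congr (fun a _ => decide_eq_decide.mpr Iff.rfl))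

lemma walkWeight_append {G : SimpleGraph V} (F : Set (Sym2 V)) {x y z : V}
    (p : G.Walk x y) (q : G.Walk y z) :
    walkWeight F (p.append q) = walkWeight F p + walkWeight F q := by
  simp [walkWeight, SimpleGraph.Walk.edges_append, List.filter_append]
  push_cast
  ring

lemma walkWeight_reverse {G : SimpleGraph V} (F : Set (Sym2 V)) {x y : V}
    (p : G.Walk x y) : walkWeight F p.reverse = walkWeight F p := by
  simp [walkWeight, SimpleGraph.Walk.edges_reverse, List.filter_reverse]

lemma walkWeight_ge {G : SimpleGraph V} (F : Set (Sym2 V)) {x y : V}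
    (p : G.Walk x y) : -(p.length : ℤ) ≤ walkWeight F p := by
  have h1 : (p.edges.filter fun e => e ∈ F).length ≤ p.length := by
    rw [← SimpleGraph.Walk.length_edges]; exact List.length_filter_le _ _
  have h0 : (0:ℤ) ≤ ((p.edges.filter fun e => e ∉ F).length : ℤ) := by positivity
  rw [walkWeight]
  have := Int.ofNat_le.mpr h1
  omega

lemma filter_mem_not_mem_length (F : Set (Sym2 V)) (l : List (Sym2 V)) :
    (l.filter fun e => e ∉ F).length + (l.filter fun e => e ∈ F).length = l.length := by
  rw [← List.countP_eq_length_filter, ← List.countP_eq_length_filter,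
    l.length_eq_countP_add_countP (fun e => decide (e ∈ F))]
  rw [Nat.add_comm]
  congr 1
  exact List.countP_congr (fun a _ => by simp)

lemma walkWeight_parity {G : SimpleGraph V} (F : Set (Sym2 V)) {x y : V}
    (p : G.Walk x y) : Even (walkWeight F p) ↔ Even p.length := by
  have hsum := filter_mem_not_mem_length F p.edges
  rw [SimpleGraph.Walk.length_edges] at hsum
  rw [walkWeight, Int.even_sub]
  rw [← hsum, Nat.even_add]
  constructor
  · intro h; constructor
    · intro h1; exact_mod_cast h.mp (by exact_mod_cast h1)
    · intro h1; exact_mod_cast h.mpr (by exact_mod_cast h1)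
  · intro h; constructor
    · intro h1; exact_mod_cast h.mp (by exact_mod_cast h1)
    · intro h1; exact_mod_cast h.mpr (by exact_mod_cast h1)

section DistLemmas
variable [Fintype V] {G : SimpleGraph V} {F : Set (Sym2 V)}

lemma distF_bddBelow (x y : V) :
    BddBelow {w : ℤ | ∃ p : G.Walk x y, p.IsPath ∧ walkWeight F p = w} := by
  refine ⟨-(Fintype.card V : ℤ), fun w hw => ?_⟩
  obtain ⟨p, hp, rfl⟩ := hw
  calc -(Fintype.card V : ℤ) ≤ -(p.length : ℤ) := by
        have := hp.length_lt
        omega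
    _ ≤ walkWeight F p := walkWeight_ge F p

lemma distF_le {x y : V} (p : G.Walk x y) (hp : p.IsPath) :
    distF G F x y ≤ walkWeight F p :=
  csInf_le (distF_bddBelow x y) ⟨p, hp, rfl⟩

lemma distF_achieved {x y : V} (h : G.Reachable x y) :
    ∃ p : G.Walk x y, p.IsPath ∧ walkWeight F p = distF G F x y := by
  have hne : {w : ℤ | ∃ p : G.Walk x y, p.IsPath ∧ walkWeight F p = w}.Nonempty := by
    obtain ⟨q⟩ := h
    exact ⟨walkWeight F q.bypass, q.bypass, q.bypass_isPath, rfl⟩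
  have := Int.csInf_mem hne (distF_bddBelow x y)
  obtain ⟨p, hp, hw⟩ := this
  exact ⟨p, hp, hw⟩

lemma distF_neg_achieved {x y : V} (h : distF G F x y < 0) :
    ∃ p : G.Walk x y, p.IsPath ∧ walkWeight F p = distF G F x y := by
  by_cases hr : G.Reachable x y
  · exact distF_achieved hr
  · exfalso
    have hemp : {w : ℤ | ∃ p : G.Walk x y, p.IsPath ∧ walkWeight F p = w} = ∅ := by
      ext w; simp only [Set.mem_setOf_eq, Set.mem_empty_iff_false, iff_false]
      rintro ⟨p, -, -⟩
      exact hr ⟨p⟩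
    rw [distF, hemp, Int.csInf_empty] at h
    omega

lemma distF_self (x : V) : distF G F x x = 0 := by
  have : {w : ℤ | ∃ p : G.Walk x x, p.IsPath ∧ walkWeight F p = w} = {0} := by
    ext w
    simp only [Set.mem_setOf_eq, Set.mem_singleton_iff]
    constructor
    · rintro ⟨p, hp, rfl⟩
      rw [SimpleGraph.Walk.isPath_iff_eq_nil.mp hp]
      rfl
    · rintro rfl
      exact ⟨SimpleGraph.Walk.nil, SimpleGraph.Walk.IsPath.nil, rfl⟩
  rw [distF, this, csInf_singleton]

lemma distF_symm (x y : V) : distF G F x y = distF G F y x := by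
  have key : ∀ a b : V, {w : ℤ | ∃ p : G.Walk a b, p.IsPath ∧ walkWeight F p = w} ⊆
      {w : ℤ | ∃ p : G.Walk b a, p.IsPath ∧ walkWeight F p = w} := by
    rintro a b w ⟨p, hp, rfl⟩
    exact ⟨p.reverse, hp.reverse, walkWeight_reverse F p⟩
  rw [distF, distF]
  congr 1
  exact Set.Subset.antisymm (key x y) (key y x)
end DistLemmas

section Counting
variable [Fintype V]

lemma disj_diff_inter (S S' : Set (Sym2 V)) : Disjoint (S \ S') (S ∩ S') := by
  rw [Set.disjoint_left]; rintro e ⟨-, h⟩ ⟨-, h'⟩; exact h h'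

lemma disj_diff_diff (S S' : Set (Sym2 V)) : Disjoint (S \ S') (S' \ S) := by
  rw [Set.disjoint_left]; rintro e ⟨h, -⟩ ⟨-, h'⟩; exact h' h

lemma cnt_union {S S' : Set (Sym2 V)} (h : Disjoint S S') (v : V) :
    cnt (S ∪ S') v = cnt S v + cnt S' v := by
  rw [cnt, cnt, cnt]
  have hset : {e ∈ S ∪ S' | v ∈ e} = {e ∈ S | v ∈ e} ∪ {e ∈ S' | v ∈ e} := by
    ext e; simp only [Set.mem_union, Set.mem_setOf_eq]; tauto
  rw [hset]
  exact Set.ncard_union_eq (Set.disjoint_of_subset (Set.sep_subset _ _) (Set.sep_subset _ _) h)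
    (Set.toFinite _) (Set.toFinite _)

lemma cnt_diff_inter (S S' : Set (Sym2 V)) (v : V) :
    cnt S v = cnt (S \ S') v + cnt (S ∩ S') v := by
  have h : S = (S \ S') ∪ (S ∩ S') := by ext e; simp only [Set.mem_union, Set.mem_diff, Set.mem_inter_iff]; tauto
  conv_lhs => rw [h]
  exact cnt_union (disj_diff_inter S S') v

lemma ncard_union_eq' {S S' : Set (Sym2 V)} (h : Disjoint S S') :
    (S ∪ S').ncard = S.ncard + S'.ncard :=
  Set.ncard_union_eq h (Set.toFinite _) (Set.toFinite _)

lemma ncard_diff_inter (S S' : Set (Sym2 V)) :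
    S.ncard = (S \ S').ncard + (S ∩ S').ncard := by
  have h : S = (S \ S') ∪ (S ∩ S') := by ext e; simp only [Set.mem_union, Set.mem_diff, Set.mem_inter_iff]; tauto
  conv_lhs => rw [h]
  exact ncard_union_eq' (disj_diff_inter S S')

lemma SD_cnt (F Z : Set (Sym2 V)) (v : V) :
    cnt (SD F Z) v + 2 * cnt (F ∩ Z) v = cnt F v + cnt Z v := by
  have h1 : cnt (SD F Z) v = cnt (F \ Z) v + cnt (Z \ F) v := cnt_union (disj_diff_diff F Z) v
  have h2 := cnt_diff_inter F Z v
  have h3 := cnt_diff_inter Z F v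
  have h4 : cnt (Z ∩ F) v = cnt (F ∩ Z) v := by rw [Set.inter_comm]
  omega

lemma SD_ncard (F Z : Set (Sym2 V)) :
    ((SD F Z).ncard : ℤ) = (F.ncard : ℤ) + sW F Z := by
  have h1 : (SD F Z).ncard = (F \ Z).ncard + (Z \ F).ncard := ncard_union_eq' (disj_diff_diff F Z)
  have h2 := ncard_diff_inter F Z
  have h3 := ncard_diff_inter Z F
  have h4 : (Z ∩ F).ncard = (F ∩ Z).ncard := by rw [Set.inter_comm]
  rw [sW]
  omega

lemma SD_subset {F Z E : Set (Sym2 V)} (hF : F ⊆ E) (hZ : Z ⊆ E) : SD F Z ⊆ E := by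
  rintro e (he | he)
  · exact hF he.1
  · exact hZ he.1

lemma SD_invol (F J : Set (Sym2 V)) : SD F (SD F J) = J := by
  ext e; simp only [SD, Set.mem_union, Set.mem_diff]; tauto

lemma sW_union {F S S' : Set (Sym2 V)} (h : Disjoint S S') :
    sW F (S ∪ S') = sW F S + sW F S' := by
  rw [sW, sW, sW]
  have h1 : (S ∪ S') \ F = (S \ F) ∪ (S' \ F) := by ext e; simp only [Set.mem_union, Set.mem_diff]; tauto
  have h2 : (S ∪ S') ∩ F = (S ∩ F) ∪ (S' ∩ F) := by ext e; simp only [Set.mem_union, Set.mem_inter_iff]; tauto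
  rw [h1, h2,
    ncard_union_eq' (Set.disjoint_of_subset (Set.diff_subset) (Set.diff_subset) h),
    ncard_union_eq' (Set.disjoint_of_subset (Set.inter_subset_left) (Set.inter_subset_left) h)]
  push_cast; ring

end Counting

section PathParity
variable [Fintype V] {G : SimpleGraph V}

lemma cnt_insert {e : Sym2 V} {S : Set (Sym2 V)} (he : e ∉ S) (w : V) :
    cnt (insert e S) w = (if w ∈ e then 1 else 0) + cnt S w := by
  have hset : {f ∈ insert e S | w ∈ f} =
      if w ∈ e then insert e {f ∈ S | w ∈ f} else {f ∈ S | w ∈ f} := by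
    by_cases hw : w ∈ e
    · rw [if_pos hw]
      ext f
      simp only [Set.mem_setOf_eq, Set.mem_insert_iff]
      constructor
      · rintro ⟨rfl | hf, h2⟩
        · exact Or.inl rfl
        · exact Or.inr ⟨hf, h2⟩
      · rintro (rfl | ⟨h1, h2⟩)
        · exact ⟨Or.inl rfl, hw⟩
        · exact ⟨Or.inr h1, h2⟩
    · rw [if_neg hw]
      ext f
      simp only [Set.mem_setOf_eq, Set.mem_insert_iff]
      constructor
      · rintro ⟨rfl | hf, h2⟩
        · exact absurd h2 hw
        · exact ⟨hf, h2⟩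
      · rintro ⟨h1, h2⟩
        exact ⟨Or.inr h1, h2⟩
  rw [cnt, cnt, hset]
  by_cases hw : w ∈ e
  · rw [if_pos hw, if_pos hw, Set.ncard_insert_of_notMem (fun hc => he hc.1) (Set.toFinite _)]
    omega
  · rw [if_neg hw, if_neg hw]
    omega

lemma eset_nil {u : V} : eset (SimpleGraph.Walk.nil : G.Walk u u) = ∅ := by
  ext e; simp [eset]

lemma eset_cons {u c v : V} (h : G.Adj u c) (q : G.Walk c v) :
    eset (SimpleGraph.Walk.cons h q) = insert s(u, c) (eset q) := by
  ext e; simp [eset]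

lemma cnt_empty (w : V) : cnt (∅ : Set (Sym2 V)) w = 0 := by
  simp [cnt]

lemma edge_not_mem_eset {u c v : V} (q : G.Walk c v) (hu : u ∉ q.support) (c' : V) :
    s(u, c') ∉ eset q := fun hc => hu (q.fst_mem_support_of_mem_edges hc)

lemma cnt_eset_path {u v : V} (p : G.Walk u v) (hp : p.IsPath) (w : V) :
    Odd (cnt (eset p) w) ↔ ((w = u ∨ w = v) ∧ u ≠ v) := by
  induction p with
  | nil => simp [eset_nil, cnt_empty]
  | @cons u c v h q IH =>
    rw [SimpleGraph.Walk.cons_isPath_iff] at hp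
    obtain ⟨hq, hu⟩ := hp
    have huv : u ≠ v := fun hc => hu (hc ▸ q.end_mem_support)
    have huc : u ≠ c := h.ne
    have hIH := IH hq
    rw [eset_cons, cnt_insert (edge_not_mem_eset q hu c) w]
    have hmem : (w ∈ s(u, c)) ↔ (w = u ∨ w = c) := Sym2.mem_iff
    rw [Nat.odd_iff] at hIH ⊢
    by_cases hcv : c = v
    · subst hcv
      have hqnil : q = SimpleGraph.Walk.nil := SimpleGraph.Walk.isPath_iff_eq_nil.mp hq
      subst hqnil
      rw [eset_nil, cnt_empty]
      by_cases hwu : w = u <;> by_cases hwc : w = c <;>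
        simp [hmem, hwu, hwc, huv, huc] <;> tauto
    · by_cases hwu : w = u <;> by_cases hwc : w = c <;> by_cases hwv : w = v <;>
        simp_all [hmem] <;> omega
end PathParity

section JoinLemmas
variable [Fintype V] {G : SimpleGraph V} {T : Set V} {F : Set (Sym2 V)}

lemma isJoin_cnt_iff (hj : IsJoin G T F) (v : V) : v ∈ T ↔ Odd (cnt F v) := hj.2 v

lemma isJoin_SD_even (hj : IsJoin G T F) {Z : Set (Sym2 V)} (hZ : Z ⊆ G.edgeSet)
    (hev : ∀ v, Even (cnt Z v)) : IsJoin G T (SD F Z) := by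
  refine ⟨SD_subset hj.1 hZ, fun v => ?_⟩
  have h1 := SD_cnt F Z v
  have h2 := (hev v)
  have h3 := hj.2 v
  show v ∈ T ↔ Odd (cnt (SD F Z) v)
  rw [Nat.even_iff] at h2
  rw [isJoin_cnt_iff hj, Nat.odd_iff, Nat.odd_iff] at *
  omega

lemma sW_nonneg_of_even (hF : IsMinJoin G T F) {Z : Set (Sym2 V)} (hZ : Z ⊆ G.edgeSet)
    (hev : ∀ v, Even (cnt Z v)) : 0 ≤ sW F Z := by
  have hj := isJoin_SD_even hF.1 hZ hev
  have hle := hF.2 _ hj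
  have hcard := SD_ncard F Z
  omega

end JoinLemmas

section MoreWalk
variable [Fintype V] {G : SimpleGraph V}

lemma path_edge_endpoints {u v : V} (p : G.Walk u v) (hp : p.IsPath)
    (he : s(u, v) ∈ p.edges) : p.length = 1 := by
  cases p with
  | nil => simp at he
  | @cons _ c _ h q =>
    rw [SimpleGraph.Walk.cons_isPath_iff] at hp
    obtain ⟨hq, hu⟩ := hp
    rw [SimpleGraph.Walk.edges_cons, List.mem_cons] at he
    rcases he with he | he
    · have : v = c := by
        rcases Sym2.eq_iff.mp he with ⟨-, h2⟩ | ⟨h1, -⟩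
        · exact h2
        · exact absurd h1 h.ne
      subst this
      have : q = SimpleGraph.Walk.nil := SimpleGraph.Walk.isPath_iff_eq_nil.mp hq
      subst this
      rfl
    · exact absurd (q.fst_mem_support_of_mem_edges he) hu

lemma walkWeight_single {u v : V} (F : Set (Sym2 V)) (h : G.Adj u v) :
    walkWeight F (SimpleGraph.Walk.cons h SimpleGraph.Walk.nil) =
      (if s(u, v) ∈ F then -1 else 1) := by
  by_cases hf : s(u, v) ∈ F <;>
    simp [walkWeight, SimpleGraph.Walk.edges_cons, List.filter_cons, hf]

lemma walkWeight_ge_neg_one {u v : V} (F : Set (Sym2 V)) (p : G.Walk u v)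
    (h : p.length = 1) : -1 ≤ walkWeight F p := by
  have := walkWeight_ge F p
  omega

lemma eset_subset_edgeSet {u v : V} (p : G.Walk u v) : eset p ⊆ G.edgeSet :=
  fun _ he => p.edges_subset_edgeSet he

/-- single edge path -/
lemma single_path {u v : V} (h : G.Adj u v) :
    (SimpleGraph.Walk.cons h SimpleGraph.Walk.nil : G.Walk u v).IsPath := by
  rw [SimpleGraph.Walk.cons_isPath_iff]
  exact ⟨SimpleGraph.Walk.IsPath.nil, by simp [h.ne]⟩

end MoreWalk

section Bipartite
variable {G : SimpleGraph V} {A B : Set V}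

lemma walk_length_parity (hdisj : Disjoint A B)
    (hadj : ∀ v w : V, G.Adj v w → (v ∈ A ∧ w ∈ B) ∨ (v ∈ B ∧ w ∈ A))
    {u v : V} (p : G.Walk u v) : Even p.length ↔ (u ∈ A ↔ v ∈ A) := by
  induction p with
  | nil => simp
  | @cons u c v h q IH =>
    have hop : u ∈ A ↔ ¬(c ∈ A) := by
      rcases hadj u c h with ⟨h1, h2⟩ | ⟨h1, h2⟩
      · exact ⟨fun _ hc => (Set.disjoint_left.mp hdisj hc) h2, fun _ => h1⟩
      · constructor
        · intro hu; exact absurd hu (Set.disjoint_right.mp hdisj h1)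
        · intro hc; exact absurd h2 hc
    rw [SimpleGraph.Walk.length_cons, Nat.even_add_one, IH]
    tauto
end Bipartite

section Decomp
variable [Fintype V]

lemma cnt_singleton (e : Sym2 V) (v : V) :
    cnt ({e} : Set (Sym2 V)) v = if v ∈ e then 1 else 0 := by
  have h : ({e} : Set (Sym2 V)) = insert e ∅ := by simp
  rw [h, cnt_insert (by simp) v, cnt_empty]
  omega

lemma decomp (G : SimpleGraph V) :
    ∀ (n : ℕ) (Z : Set (Sym2 V)), Z.ncard ≤ n → Z ⊆ G.edgeSet → ∀ a b : V, a ≠ b →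
    (∀ v, Odd (cnt Z v) ↔ (v = a ∨ v = b)) →
    ∃ R : G.Walk a b, R.IsPath ∧ eset R ⊆ Z ∧ ∀ v, Even (cnt (Z \ eset R) v) := by
  intro n
  induction n with
  | zero =>
    intro Z hn hZ a b hab hodd
    exfalso
    have hZ0 : Z = ∅ := (Set.ncard_eq_zero (Set.toFinite Z)).mp (Nat.le_zero.mp hn)
    have := (hodd a).mpr (Or.inl rfl)
    rw [hZ0, cnt, Set.ncard_eq_zero (Set.toFinite _) |>.mpr (by ext z; simp)] at this
    simp at this
  | succ n IH =>
    intro Z hn hZ a b hab hodd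
    have hodda : Odd (cnt Z a) := (hodd a).mpr (Or.inl rfl)
    have hne : {e ∈ Z | a ∈ e}.Nonempty := by
      rw [Set.nonempty_iff_ne_empty]
      intro hc
      rw [cnt, hc, Set.ncard_empty] at hodda
      simp at hodda
    obtain ⟨e, heZ, hae⟩ := hne
    obtain ⟨c, rfl⟩ := Sym2.mem_iff_exists.mp hae
    have hadj : G.Adj a c := (G.mem_edgeSet).mp (hZ heZ)
    have hca : c ≠ a := hadj.ne'
    set Z₁ := Z \ {s(a, c)} with hZ₁def
    have heZ₁ : s(a, c) ∉ Z₁ := by simp [hZ₁def]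
    have hzins : Z = insert s(a, c) Z₁ := by
      ext z; simp only [hZ₁def, Set.mem_insert_iff, Set.mem_diff, Set.mem_singleton_iff]
      constructor
      · intro hz; by_cases hze : z = s(a, c)
        · exact Or.inl hze
        · exact Or.inr ⟨hz, hze⟩
      · rintro (rfl | ⟨hz, -⟩)
        · exact heZ
        · exact hz
    have hcnt : ∀ v, cnt Z v = (if v = a ∨ v = c then 1 else 0) + cnt Z₁ v := by
      intro v
      rw [hzins, cnt_insert heZ₁ v]
      congr 1
      exact if_congr Sym2.mem_iff rfl rfl
    have hn₁ : Z₁.ncard ≤ n := by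
      have h1 : Z₁.ncard + 1 = Z.ncard := by
        rw [hzins, Set.ncard_insert_of_notMem heZ₁ (Set.toFinite _)]
      omega
    have hZ₁sub : Z₁ ⊆ G.edgeSet := fun z hz => hZ hz.1
    by_cases hcb : c = b
    · -- single edge gives the path
      refine ⟨(SimpleGraph.Walk.cons hadj SimpleGraph.Walk.nil).copy rfl hcb,
        (by rw [SimpleGraph.Walk.isPath_copy]; exact single_path hadj), ?_, ?_⟩
      · intro z hz
        rw [eset, Set.mem_setOf_eq, SimpleGraph.Walk.edges_copy] at hz
        simp only [SimpleGraph.Walk.edges_cons, SimpleGraph.Walk.edges_nil,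
          List.mem_cons, List.not_mem_nil, or_false] at hz
        rw [hz]; exact heZ
      · intro v
        have hrem : Z \ eset ((SimpleGraph.Walk.cons hadj SimpleGraph.Walk.nil).copy rfl hcb)
            = Z₁ := by
          ext z
          rw [eset]
          simp only [Set.mem_diff, Set.mem_setOf_eq, SimpleGraph.Walk.edges_copy,
            SimpleGraph.Walk.edges_cons, SimpleGraph.Walk.edges_nil, List.mem_cons,
            List.not_mem_nil, or_false, hZ₁def, Set.mem_singleton_iff]
        rw [hrem]
        have h1 := hcnt v
        have h2 := hodd v
        rw [Nat.odd_iff] at h2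
        rw [Nat.even_iff]
        have hvb : (v = a ∨ v = b) ↔ (v = a ∨ v = c) := by rw [hcb]
        by_cases hv : v = a ∨ v = c
        · rw [if_pos hv] at h1
          have h2' : cnt Z v % 2 = 1 := h2.mpr (hvb.mpr hv)
          omega
        · rw [if_neg hv] at h1
          have h2' : ¬ cnt Z v % 2 = 1 := fun hcc => hv (hvb.mp (h2.mp hcc))
          omega
    · -- recurse on Z₁ with endpoints c, b
      have hodd₁ : ∀ v, Odd (cnt Z₁ v) ↔ (v = c ∨ v = b) := by
        intro v
        have h1 := hcnt v
        have h2 := hodd v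
        rw [Nat.odd_iff] at h2 ⊢
        by_cases hva : v = a
        · rw [if_pos (Or.inl hva)] at h1
          have h2' : cnt Z v % 2 = 1 := h2.mpr (Or.inl hva)
          have hnot : ¬(v = c ∨ v = b) := by
            rintro (h | h)
            · exact hca (h.symm.trans hva)
            · exact hab (hva.symm.trans h)
          constructor
          · intro hcc; omega
          · intro hcc; exact absurd hcc hnot
        · by_cases hvc : v = c
          · rw [if_pos (Or.inr hvc)] at h1
            have h2' : ¬ cnt Z v % 2 = 1 := by
              intro hcc
              rcases h2.mp hcc with h | h
              · exact hva h
              · exact hcb (hvc.symm.trans h)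
            constructor
            · intro _; exact Or.inl hvc
            · intro _; omega
          · rw [if_neg (by rintro (h | h); exacts [hva h, hvc h])] at h1
            constructor
            · intro hcc
              rcases h2.mp (by omega) with h | h
              · exact absurd h hva
              · exact Or.inr h
            · rintro (h | h)
              · exact absurd h hvc
              · have : cnt Z v % 2 = 1 := h2.mpr (Or.inr h)
                omega
      obtain ⟨R₁, hR₁path, hR₁sub, hR₁rem⟩ := IH Z₁ hn₁ hZ₁sub c b hcb hodd₁
      by_cases haR : a ∈ R₁.support
      · -- a lies on R₁ : drop the initial part
        set R := R₁.dropUntil a haR with hRdef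
        set P₂ := R₁.takeUntil a haR with hP₂def
        have hspec : P₂.append R = R₁ := R₁.take_spec haR
        have hRpath : R.IsPath := hR₁path.dropUntil haR
        have hP₂path : P₂.IsPath := hR₁path.takeUntil haR
        have hedges : R₁.edges = P₂.edges ++ R.edges := by
          rw [← hspec, SimpleGraph.Walk.edges_append]
        have hnodup : R₁.edges.Nodup := hR₁path.isTrail.edges_nodup
        have hdisjlist : P₂.edges.Disjoint R.edges := by
          rw [hedges] at hnodup
          exact (List.nodup_append'.mp hnodup).2.2
        have hesetR₁ : eset R₁ = eset P₂ ∪ eset R := by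
          ext z; simp only [eset, Set.mem_union, Set.mem_setOf_eq, hedges, List.mem_append]
        have hdisjset : Disjoint (eset P₂) (eset R) := by
          rw [Set.disjoint_left]
          intro z hz1 hz2
          exact hdisjlist hz1 hz2
        have hRsubZ₁ : eset R ⊆ Z₁ := fun z hz => hR₁sub (by rw [hesetR₁]; exact Or.inr hz)
        have hP₂subZ₁ : eset P₂ ⊆ Z₁ := fun z hz => hR₁sub (by rw [hesetR₁]; exact Or.inl hz)
        refine ⟨R, hRpath, fun z hz => (hRsubZ₁ hz).1, ?_⟩
        have hremeq : Z \ eset R = ({s(a, c)} : Set (Sym2 V)) ∪ (eset P₂ ∪ (Z₁ \ eset R₁)) := by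
          ext z
          simp only [Set.mem_diff, Set.mem_union, Set.mem_singleton_iff]
          constructor
          · rintro ⟨hz, hzR⟩
            by_cases hze : z = s(a, c)
            · exact Or.inl hze
            · have hz₁ : z ∈ Z₁ := ⟨hz, hze⟩
              by_cases hzP : z ∈ eset P₂
              · exact Or.inr (Or.inl hzP)
              · refine Or.inr (Or.inr ⟨hz₁, ?_⟩)
                rw [hesetR₁]
                rintro (h | h)
                · exact hzP h
                · exact hzR h
          · rintro (rfl | hzP | ⟨hz₁, hzR₁⟩)
            · exact ⟨heZ, fun hc' => heZ₁ (hRsubZ₁ hc')⟩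
            · exact ⟨(hP₂subZ₁ hzP).1, fun hc' => (Set.disjoint_left.mp hdisjset hzP) hc'⟩
            · exact ⟨hz₁.1, fun hc' => hzR₁ (by rw [hesetR₁]; exact Or.inr hc')⟩
        intro v
        rw [hremeq]
        have hd1 : Disjoint ({s(a, c)} : Set (Sym2 V)) (eset P₂ ∪ (Z₁ \ eset R₁)) := by
          rw [Set.disjoint_left]
          rintro z rfl (h | h)
          · exact heZ₁ (hP₂subZ₁ h)
          · exact heZ₁ h.1
        have hd2 : Disjoint (eset P₂) (Z₁ \ eset R₁) := by
          rw [Set.disjoint_left]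
          intro z hz1 hz2
          exact hz2.2 (by rw [hesetR₁]; exact Or.inl hz1)
        rw [cnt_union hd1, cnt_union hd2, cnt_singleton]
        have hsing : (if v ∈ s(a, c) then 1 else 0) = if v = a ∨ v = c then 1 else 0 :=
          if_congr Sym2.mem_iff rfl rfl
        rw [hsing]
        have hP2 := cnt_eset_path P₂ hP₂path v
        have hrem := hR₁rem v
        rw [Nat.odd_iff] at hP2
        rw [Nat.even_iff] at hrem ⊢
        by_cases hv : v = a ∨ v = c
        · rw [if_pos hv]
          have h2' : cnt (eset P₂) v % 2 = 1 := hP2.mpr ⟨hv.elim Or.inr Or.inl, hca⟩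
          omega
        · rw [if_neg hv]
          have h2' : ¬ cnt (eset P₂) v % 2 = 1 := fun hcc =>
            hv ((hP2.mp hcc).1.elim Or.inr Or.inl)
          omega
      · -- prepend the edge
        set R := SimpleGraph.Walk.cons hadj R₁ with hRdef
        have hRpath : R.IsPath := by
          rw [hRdef, SimpleGraph.Walk.cons_isPath_iff]
          exact ⟨hR₁path, haR⟩
        have hnotin : s(a, c) ∉ eset R₁ := edge_not_mem_eset R₁ haR c
        have hesetR : eset R = insert s(a, c) (eset R₁) := eset_cons hadj R₁
        refine ⟨R, hRpath, ?_, ?_⟩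
        · rw [hesetR]
          rintro z (rfl | hz)
          · exact heZ
          · exact (hR₁sub hz).1
        · intro v
          have hremeq : Z \ eset R = Z₁ \ eset R₁ := by
            rw [hesetR, hzins]
            ext z
            simp only [Set.mem_diff, Set.mem_insert_iff, hZ₁def, Set.mem_singleton_iff]
            tauto
          rw [hremeq]
          exact hR₁rem v
end Decomp

section KeyLemmas
variable [Fintype V] {G : SimpleGraph V} {T : Set V} {F : Set (Sym2 V)}

lemma sW_singleton (F : Set (Sym2 V)) (e : Sym2 V) :
    sW F ({e} : Set (Sym2 V)) = if e ∈ F then -1 else 1 := by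
  rw [sW]
  by_cases he : e ∈ F
  · rw [if_pos he]
    have h1 : ({e} : Set (Sym2 V)) \ F = ∅ := by ext z; simp; rintro rfl; exact he
    have h2 : ({e} : Set (Sym2 V)) ∩ F = {e} := by ext z; simp; rintro rfl; exact he
    rw [h1, h2, Set.ncard_empty, Set.ncard_singleton]
    rfl
  · rw [if_neg he]
    have h1 : ({e} : Set (Sym2 V)) \ F = {e} := by ext z; simp; rintro rfl; exact he
    have h2 : ({e} : Set (Sym2 V)) ∩ F = ∅ := by ext z; simp; rintro rfl; exact he
    rw [h1, h2, Set.ncard_empty, Set.ncard_singleton]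
    rfl

lemma sW_insert {e : Sym2 V} {S : Set (Sym2 V)} (he : e ∉ S) (F : Set (Sym2 V)) :
    sW F (insert e S) = (if e ∈ F then -1 else 1) + sW F S := by
  have h : insert e S = ({e} : Set (Sym2 V)) ∪ S := by ext z; simp
  rw [h, sW_union (by rw [Set.disjoint_left]; rintro z rfl hz; exact he hz), sW_singleton]

/-- key invariance-style lemma: an edge of any minimum join has `F`-distance `≤ -1`. -/
lemma edge_dist_neg {F' : Set (Sym2 V)} (hF : IsMinJoin G T F) (hF' : IsMinJoin G T F')
    {a b : V} (he : s(a, b) ∈ F') : distF G F a b ≤ -1 := by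
  have hadj : G.Adj a b := (G.mem_edgeSet).mp (hF'.1.1 he)
  have hab : a ≠ b := hadj.ne
  set J := F' \ {s(a, b)} with hJdef
  have heJ : s(a, b) ∉ J := by simp [hJdef]
  have hF'ins : F' = insert s(a, b) J := by
    ext z; simp only [hJdef, Set.mem_insert_iff, Set.mem_diff, Set.mem_singleton_iff]
    constructor
    · intro hz; by_cases hze : z = s(a, b)
      · exact Or.inl hze
      · exact Or.inr ⟨hz, hze⟩
    · rintro (rfl | ⟨hz, -⟩) <;> assumption
  set Z := SD F J with hZdef
  have hJsub : J ⊆ G.edgeSet := fun z hz => hF'.1.1 hz.1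
  have hZsub : Z ⊆ G.edgeSet := SD_subset hF.1.1 hJsub
  have hoddZ : ∀ v, Odd (cnt Z v) ↔ (v = a ∨ v = b) := by
    intro v
    have h1 := SD_cnt F J v
    have h2 : cnt F' v = (if v = a ∨ v = b then 1 else 0) + cnt J v := by
      rw [hF'ins, cnt_insert heJ v]
      congr 1
      exact if_congr Sym2.mem_iff rfl rfl
    have h3 : (v ∈ T) ↔ Odd (cnt F v) := hF.1.2 v
    have h4 : (v ∈ T) ↔ Odd (cnt F' v) := hF'.1.2 v
    have h5 : Odd (cnt F v) ↔ Odd (cnt F' v) := h3.symm.trans h4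
    rw [Nat.odd_iff, Nat.odd_iff] at h5
    rw [Nat.odd_iff]
    rw [← hZdef] at h1
    by_cases hv : v = a ∨ v = b
    · rw [if_pos hv] at h2
      constructor
      · intro _; exact hv
      · intro _; omega
    · rw [if_neg hv] at h2
      constructor
      · intro hcc; omega
      · intro hcc; exact absurd hcc hv
  obtain ⟨R, hRpath, hRsub, hRrem⟩ := decomp G Z.ncard Z le_rfl hZsub a b hab hoddZ
  -- weights
  have hZsplit : Z = eset R ∪ (Z \ eset R) := by
    ext z; simp only [Set.mem_union, Set.mem_diff]
    constructor
    · intro hz; by_cases hzR : z ∈ eset R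
      · exact Or.inl hzR
      · exact Or.inr ⟨hz, hzR⟩
    · rintro (hz | ⟨hz, -⟩)
      · exact hRsub hz
      · exact hz
  have hdisj : Disjoint (eset R) (Z \ eset R) := by
    rw [Set.disjoint_left]; intro z hz1 hz2; exact hz2.2 hz1
  have hsWsplit : sW F Z = sW F (eset R) + sW F (Z \ eset R) := by
    conv_lhs => rw [hZsplit]
    exact sW_union hdisj
  have hrem_nonneg : 0 ≤ sW F (Z \ eset R) :=
    sW_nonneg_of_even hF (fun z hz => hZsub hz.1) hRrem
  -- size computation
  have hSDJ : SD F Z = J := SD_invol F J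
  have hcard : ((SD F Z).ncard : ℤ) = (F.ncard : ℤ) + sW F Z := SD_ncard F Z
  have hJcard : (J.ncard : ℤ) = (F'.ncard : ℤ) - 1 := by
    have h1 : F'.ncard = J.ncard + 1 := by
      rw [hF'ins, Set.ncard_insert_of_notMem heJ (Set.toFinite _)]
    omega
  have hFF' : F.ncard = F'.ncard := le_antisymm (hF.2 F' hF'.1) (hF'.2 F hF.1)
  have hsWZ : sW F Z = -1 := by
    rw [hSDJ] at hcard
    omega
  have hle : distF G F a b ≤ walkWeight F R := distF_le R hRpath
  rw [walkWeight_eq_sW F R hRpath] at hle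
  omega
end KeyLemmas

section Geometry
variable [Fintype V] {G : SimpleGraph V} {T A B X : Set V} {F : Set (Sym2 V)}

lemma Cset_not_A (hbip : IsBipartitionOn G Set.univ A B) (hXA : X ⊆ A)
    (hX : MaxBipExtreme G F A B X) :
    ∀ y ∈ Cset G F Set.univ X, y ∉ A := by
  rintro y ⟨⟨-, hyX⟩, hyD⟩ hyA
  have hnD : ∀ x ∈ X, 0 ≤ distF G F x y := by
    intro x hx
    by_contra hc
    exact hyD ⟨Set.mem_univ y, hyX, x, hx, by omega⟩
  have hext : IsExtremeSet G F (X ∪ {y}) := by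
    rintro u (hu | hu) v (hv | hv)
    · exact hX.1 u hu v hv
    · rw [Set.mem_singleton_iff] at hv; subst hv
      exact hnD u hu
    · rw [Set.mem_singleton_iff] at hu; subst hu
      rw [distF_symm]
      exact hnD v hv
    · rw [Set.mem_singleton_iff] at hu hv; subst hu; subst hv
      rw [distF_self]
  have heq := hX.2.2 (X ∪ {y}) hext
    (Or.inl (Set.union_subset hXA (by simpa using hyA))) Set.subset_union_left
  apply hyX
  rw [← heq]
  exact Or.inr rfl

lemma neighbor_in_X (hbip : IsBipartitionOn G Set.univ A B) (hXA : X ⊆ A)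
    (hX : MaxBipExtreme G F A B X) (hF : IsMinJoin G T F)
    {a b : V} (hb : b ∈ Cset G F Set.univ X) (hadj : G.Adj a b) : a ∈ X := by
  have hbA : b ∉ A := Cset_not_A hbip hXA hX b hb
  have haA : a ∈ A := by
    rcases hbip.2.2 a b hadj with ⟨h1, -⟩ | ⟨-, h2⟩
    · exact h1
    · exact absurd h2 hbA
  by_contra haX
  -- a ∈ Dset
  have haD : a ∈ Dset G F Set.univ X := by
    by_cases hD : a ∈ Dset G F Set.univ X
    · exact hD
    · exact absurd haA (Cset_not_A hbip hXA hX a ⟨⟨Set.mem_univ a, haX⟩, hD⟩)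
  obtain ⟨-, -, x, hxX, hd⟩ := haD
  -- distance from x to a is even and ≤ -2
  obtain ⟨Q, hQpath, hQw⟩ := distF_neg_achieved hd
  have hxA : x ∈ A := hXA hxX
  have heven : Even (walkWeight F Q) := by
    rw [walkWeight_parity, walk_length_parity hbip.2.1 hbip.2.2 Q]
    tauto
  have hQle : walkWeight F Q ≤ -2 := by
    rcases heven with ⟨k, hk⟩
    omega
  have hab : a ≠ b := hadj.ne
  have hxb : 0 ≤ distF G F x b := by
    by_contra hc
    exact hb.2 ⟨Set.mem_univ b, hb.1.2, x, hxX, by omega⟩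
  by_cases hbQ : b ∈ Q.support
  · -- use the cycle through the edge
    set tk := Q.takeUntil b hbQ with htk
    set dr := Q.dropUntil b hbQ with hdr
    have hspec : tk.append dr = Q := Q.take_spec hbQ
    have hw : walkWeight F tk + walkWeight F dr = walkWeight F Q := by
      rw [← walkWeight_append, hspec]
    have htkpath : tk.IsPath := hQpath.takeUntil hbQ
    have hdrpath : dr.IsPath := hQpath.dropUntil hbQ
    have htkw : 0 ≤ walkWeight F tk := le_trans hxb (distF_le tk htkpath)
    have hdrw : walkWeight F dr ≤ -2 := by omega
    by_cases hedge : s(b, a) ∈ dr.edges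
    · have := path_edge_endpoints dr hdrpath hedge
      have := walkWeight_ge_neg_one F dr this
      omega
    · -- conservativeness contradiction
      have hnotin : s(b, a) ∉ eset dr := hedge
      set Zc := insert s(b, a) (eset dr) with hZc
      have hZsub : Zc ⊆ G.edgeSet := by
        rintro z (rfl | hz)
        · exact hadj.symm
        · exact eset_subset_edgeSet dr hz
      have hZev : ∀ v, Even (cnt Zc v) := by
        intro v
        rw [hZc, cnt_insert hnotin v]
        have hpar := cnt_eset_path dr hdrpath v
        have hba : b ≠ a := hab.symm
        have hif : (if v ∈ s(b, a) then 1 else 0) = if v = b ∨ v = a then 1 else 0 :=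
          if_congr Sym2.mem_iff rfl rfl
        rw [hif, Nat.odd_iff] at *
        rw [Nat.even_iff]
        by_cases hv : v = b ∨ v = a
        · rw [if_pos hv]
          have := hpar.mpr ⟨hv, hba⟩
          omega
        · rw [if_neg hv]
          have : ¬ cnt (eset dr) v % 2 = 1 := fun hcc => hv (hpar.mp hcc).1
          omega
      have hcons := sW_nonneg_of_even hF hZsub hZev
      have hsw : sW F Zc = (if s(b, a) ∈ F then -1 else 1) + sW F (eset dr) :=
        sW_insert hnotin F
      rw [← walkWeight_eq_sW F dr hdrpath] at hsw
      by_cases hbf : s(b, a) ∈ F <;> rw [hsw] at hcons <;> simp [hbf] at hcons <;> omega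
  · -- append the edge to Q
    set R := Q.append (SimpleGraph.Walk.cons hadj SimpleGraph.Walk.nil) with hR
    have hRpath : R.IsPath := by
      rw [SimpleGraph.Walk.isPath_def, hR, SimpleGraph.Walk.support_append]
      simp only [SimpleGraph.Walk.support_cons, SimpleGraph.Walk.support_nil, List.tail_cons]
      rw [List.nodup_append]
      refine ⟨hQpath.support_nodup, List.nodup_singleton b, ?_⟩
      intro z hz
      simp only [List.mem_singleton]
      rintro _ rfl rfl
      exact hbQ hz
    have hRw : walkWeight F R = walkWeight F Q + walkWeight F (SimpleGraph.Walk.cons hadj SimpleGraph.Walk.nil) := walkWeight_append F Q _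
    rw [walkWeight_single F hadj] at hRw
    have hRw' : walkWeight F R ≤ -1 := by
      by_cases hf : s(a, b) ∈ F <;> simp [hf] at hRw <;> omega
    have : distF G F x b ≤ walkWeight F R := distF_le R hRpath
    omega

end Geometry

section Capstone
variable [Fintype V] {G : SimpleGraph V} {T A B X C' : Set V} {F : Set (Sym2 V)}

lemma no_edge_at_C (hbip : IsBipartitionOn G Set.univ A B) (hF : IsMinJoin G T F)
    (hXA : X ⊆ A) (hX : MaxBipExtreme G F A B X) (hC' : C' ⊆ Cset G F Set.univ X)
    {F' : Set (Sym2 V)} (hF' : IsMinJoin G T F') :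
    ∀ e ∈ F', ∀ v ∈ e, v ∉ C' := by
  intro e heF' v hve hvC'
  have hbC : v ∈ Cset G F Set.univ X := hC' hvC'
  obtain ⟨a, rfl⟩ := Sym2.mem_iff_exists.mp hve
  have hadj : G.Adj v a := (G.mem_edgeSet).mp (hF'.1.1 heF')
  have haX : a ∈ X := neighbor_in_X hbip hXA hX hF hbC hadj.symm
  have heF'' : s(a, v) ∈ F' := by rwa [Sym2.eq_swap] at heF'
  have hdist : distF G F a v ≤ -1 := edge_dist_neg hF hF' heF''
  exact hbC.2 ⟨Set.mem_univ v, hbC.1.2, a, haX, by omega⟩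

lemma C_not_T (hbip : IsBipartitionOn G Set.univ A B) (hF : IsMinJoin G T F)
    (hXA : X ⊆ A) (hX : MaxBipExtreme G F A B X) (hC' : C' ⊆ Cset G F Set.univ X) :
    ∀ v ∈ C', v ∉ T := by
  intro v hvC' hvT
  have hodd : Odd (cnt F v) := hF.1.2 v |>.mp hvT
  have hne : {e ∈ F | v ∈ e}.Nonempty := by
    rw [Set.nonempty_iff_ne_empty]
    intro hc
    rw [cnt, hc, Set.ncard_empty] at hodd
    simp at hodd
  obtain ⟨e, heF, hve⟩ := hne
  exact no_edge_at_C hbip hF hXA hX hC' hF e heF v hve hvC'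

lemma gDelete_edgeSet_subset (S : Set V) : (gDelete G S).edgeSet ⊆ G.edgeSet := by
  intro e
  induction e using Sym2.ind with
  | _ u w => exact fun h => (show G.Adj u w ∧ u ∉ S ∧ w ∉ S from h).1

lemma gDelete_edge_not_mem {S : Set V} {e : Sym2 V} (he : e ∈ (gDelete G S).edgeSet)
    {v : V} (hv : v ∈ e) : v ∉ S := by
  induction e using Sym2.ind with
  | _ u w =>
    rcases Sym2.mem_iff.mp hv with rfl | rfl
    · exact (show G.Adj _ _ ∧ _ ∉ S ∧ _ ∉ S from he).2.1
    · exact (show G.Adj _ _ ∧ _ ∉ S ∧ _ ∉ S from he).2.2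

lemma gDelete_mem_edgeSet {S : Set V} {u w : V} (h : G.Adj u w) (hu : u ∉ S) (hw : w ∉ S) :
    s(u, w) ∈ (gDelete G S).edgeSet := (⟨h, hu, hw⟩ : G.Adj u w ∧ u ∉ S ∧ w ∉ S)

lemma join_up (hCT : ∀ v ∈ C', v ∉ T) {F'' : Set (Sym2 V)}
    (h : IsJoin (gDelete G C') (T \ C') F'') : IsJoin G T F'' := by
  refine ⟨fun e he => gDelete_edgeSet_subset C' (h.1 he), fun v => ?_⟩
  by_cases hv : v ∈ C'
  · have hempty : {e ∈ F'' | v ∈ e} = ∅ := by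
      ext e
      simp only [Set.mem_setOf_eq, Set.mem_empty_iff_false, iff_false, not_and]
      intro heF'' hve
      exact absurd hv (gDelete_edge_not_mem (h.1 heF'') hve)
    constructor
    · intro hvT; exact absurd hvT (hCT v hv)
    · intro hodd
      rw [hempty, Set.ncard_empty] at hodd
      simp at hodd
  · have := h.2 v
    simp only [Set.mem_diff, hv, not_false_iff, and_true] at this
    exact this

lemma join_down {F'' : Set (Sym2 V)} (h : IsJoin G T F'')
    (hCT : ∀ v ∈ C', v ∉ T) (hE : ∀ e ∈ F'', ∀ v ∈ e, v ∉ C') :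
    IsJoin (gDelete G C') (T \ C') F'' := by
  constructor
  · intro e he
    have hG : e ∈ G.edgeSet := h.1 he
    induction e using Sym2.ind with
    | _ u w =>
      exact gDelete_mem_edgeSet hG (hE _ he u (Sym2.mem_iff.mpr (Or.inl rfl)))
        (hE _ he w (Sym2.mem_iff.mpr (Or.inr rfl)))
  · intro v
    by_cases hv : v ∈ C'
    · have hempty : {e ∈ F'' | v ∈ e} = ∅ := by
        ext e
        simp only [Set.mem_setOf_eq, Set.mem_empty_iff_false, iff_false, not_and]
        intro heF'' hve
        exact absurd hv (hE e heF'' v hve)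
      constructor
      · rintro ⟨-, hc⟩; exact absurd hv hc
      · intro hodd
        rw [hempty, Set.ncard_empty] at hodd
        simp at hodd
    · have := h.2 v
      simp only [Set.mem_diff, hv, not_false_iff, and_true]
      exact this
end Capstone


/-- for `C' ⊆ C_X`, with `G' = G − C'` and `T' = T ∖ C'`, a set of edges is
a minimum join of `(G', T')` iff it is a minimum join of `(G, T)`. -/
theorem stmt_7 [Fintype V] (G : SimpleGraph V) (T A B X C' : Set V) (F : Set (Sym2 V))
    (hGT : IsGraft G T) (hbip : IsBipartitionOn G Set.univ A B)
    (hF : IsMinJoin G T F) (hXA : X ⊆ A) (hX : MaxBipExtreme G F A B X)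
    (hC' : C' ⊆ Cset G F Set.univ X) :
    ∀ F' : Set (Sym2 V), IsMinJoin (gDelete G C') (T \ C') F' ↔ IsMinJoin G T F' := by
  intro F'
  have hCT := C_not_T hbip hF hXA hX hC'
  have hFjoin' : IsJoin (gDelete G C') (T \ C') F :=
    join_down hF.1 hCT (no_edge_at_C hbip hF hXA hX hC' hF)
  constructor
  · intro hmin'
    refine ⟨join_up hCT hmin'.1, fun J hJ => ?_⟩
    exact le_trans (hmin'.2 F hFjoin') (hF.2 J hJ)
  · intro hmin
    refine ⟨join_down hmin.1 hCT (no_edge_at_C hbip hF hXA hX hC' hmin), fun J hJ => ?_⟩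
    exact hmin.2 J (join_up hCT hJ)
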